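/- For j > k, the difference of eigenvalues satisfies λ_j - λ_k = (v_j - v_k)·(1 - Σ_{l=0}^j f_l)/(1-ρ) + (1/(1-ρ)) Σ_{l=k+1}^j (v_l - v_k) f_l, where λ_i = v_i - (1/(1-ρ)) Σ_{l=i+1}^N (v_l - v_i) f_l and ρ = Σ_{l=0}^N f_l. In particular, if f_l ≥ 0 for all l and Σ_{l=0}^j f_l < 1, then λ_j > λ_k whenever j > k (strict hyperbolicity on this region). -/

import Mathlib

/-- For `j > k`,
`λ_j - λ_k = (v_j - v_k)(1 - Σ_{l=0}^j f_l)/(1-ρ) + (1/(1-ρ)) Σ_{l=k+1}^j (v_l - v_k) f_l`;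
in particular if `f ≥ 0` and `Σ_{l=0}^j f_l < 1` then `λ_j > λ_k` (strict hyperbolicity). -/
theorem stmt10 (N : ℕ) (hN : 1 ≤ N) (v f : ℕ → ℝ)
    (hv0 : v 0 = 0) (hvN : v N = 1) (hv : StrictMonoOn v (Set.Iic N))
    (hρ : ∑ l ∈ Finset.range (N+1), f l < 1)
    (lam : ℕ → ℝ)
    (hlam : ∀ i, lam i = v i - (1/(1 - ∑ l ∈ Finset.range (N+1), f l)) *
      ∑ l ∈ Finset.Ioc i N, (v l - v i) * f l) :
    ∀ j k, k < j → j ≤ N →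
      (lam j - lam k = (v j - v k) * (1 - ∑ l ∈ Finset.range (j+1), f l) /
          (1 - ∑ l ∈ Finset.range (N+1), f l) +
        (1/(1 - ∑ l ∈ Finset.range (N+1), f l)) * ∑ l ∈ Finset.Ioc k j, (v l - v k) * f l) ∧
      ((∀ l, 0 ≤ f l) → ∑ l ∈ Finset.range (j+1), f l < 1 → lam k < lam j) := by
  intro j k hkj hjN
  set ρ := ∑ l ∈ Finset.range (N+1), f l with hρdef
  have hD : (0:ℝ) < 1 - ρ := by linarith
  have hDne : (1:ℝ) - ρ ≠ 0 := ne_of_gt hD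
  have h1 : ∑ l ∈ Finset.Ioc k N, (v l - v k) * f l
      = ∑ l ∈ Finset.Ioc k j, (v l - v k) * f l + ∑ l ∈ Finset.Ioc j N, (v l - v k) * f l :=
    (Finset.sum_Ioc_consecutive _ hkj.le hjN).symm
  have h2 : ∑ l ∈ Finset.Ioc j N, (v l - v j) * f l
      = ∑ l ∈ Finset.Ioc j N, (v l - v k) * f l - (v j - v k) * ∑ l ∈ Finset.Ioc j N, f l := by
    rw [Finset.mul_sum, ← Finset.sum_sub_distrib]
    exact Finset.sum_congr rfl (fun l _ => by ring)
  have h3 : ρ = ∑ l ∈ Finset.range (j+1), f l + ∑ l ∈ Finset.Ioc j N, f l := by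
    rw [hρdef, Finset.range_eq_Ico,
      ← Finset.sum_Ico_consecutive f (Nat.zero_le (j+1)) (by omega : j+1 ≤ N+1)]
    congr 1
    · rw [Finset.range_eq_Ico]
    rw [Finset.Ico_add_one_add_one_eq_Ioc]
  have heq : lam j - lam k = (v j - v k) * (1 - ∑ l ∈ Finset.range (j+1), f l) / (1 - ρ) +
      (1/(1 - ρ)) * ∑ l ∈ Finset.Ioc k j, (v l - v k) * f l := by
    rw [hlam j, hlam k, h2, h1]
    field_simp
    linear_combination (v k - v j) * h3
  refine ⟨heq, fun hf hS => ?_⟩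
  have hvjk : v k < v j := hv (by simp; omega) (by simpa using hjN) hkj
  have hpos : 0 < (v j - v k) * (1 - ∑ l ∈ Finset.range (j+1), f l) / (1 - ρ) := by
    apply div_pos (by nlinarith) hD
  have hnn : 0 ≤ ∑ l ∈ Finset.Ioc k j, (v l - v k) * f l := by
    apply Finset.sum_nonneg
    intro l hl
    simp only [Finset.mem_Ioc] at hl
    have : v k < v l := hv (by simp; omega) (by simp; omega) hl.1
    have := hf l
    nlinarith
  have : 0 < lam j - lam k := by
    rw [heq]
    have : 0 ≤ (1/(1 - ρ)) * ∑ l ∈ Finset.Ioc k j, (v l - v k) * f l :=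
      mul_nonneg (by positivity) hnn
    linarith
  linarith
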